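/- Let $C > \beta > 0$, let $M_0, N \ge 0$, let $t_0 \le t_1$, and let $V : \mathbb{R} \to \mathbb{R}$ be differentiable on $[t_0, t_1]$ with $V'(t) \le -C\,V(t) + M_0 e^{-\beta t} + N$ for all $t \in [t_0, t_1]$. If moreover $V(t_0) \ge \frac{M_0 e^{-\beta t_0}}{C - \beta} + \frac{N}{C}$, then for all $t \in [t_0, t_1]$: $V(t) \le \left[V(t_0) - \frac{N}{C}\right]e^{-\beta(t - t_0)} + \frac{N}{C}$. -/
import Mathlib


/-- Equation (24) (Condition 1, `C - β > 0`): on a turn-on inter-event interval the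
Lyapunov function lies beneath an exponentially converging function with rate `β`
and residual value `N / C`. -/
theorem lyapunov_bound_fast_decay (C β M0 N t0 t1 : ℝ) (hβ : 0 < β) (hC : β < C)
    (hM0 : 0 ≤ M0) (hN : 0 ≤ N) (ht : t0 ≤ t1) (V V' : ℝ → ℝ)
    (hderiv : ∀ t ∈ Set.Icc t0 t1, HasDerivWithinAt V (V' t) (Set.Icc t0 t1) t)
    (hineq : ∀ t ∈ Set.Icc t0 t1, V' t ≤ -C * V t + M0 * Real.exp (-β * t) + N)
    (hV0 : V t0 ≥ M0 * Real.exp (-β * t0) / (C - β) + N / C) :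
    ∀ t ∈ Set.Icc t0 t1,
      V t ≤ (V t0 - N / C) * Real.exp (-β * (t - t0)) + N / C := by
  have hCβ : (0:ℝ) < C - β := sub_pos.mpr hC
  have hCpos : (0:ℝ) < C := hβ.trans hC
  set A := V t0 - N / C with hA
  have key : M0 * Real.exp (-β * t0) ≤ (C - β) * A := by
    have h1 : M0 * Real.exp (-β * t0) / (C - β) ≤ A := by
      have := hV0
      rw [ge_iff_le] at this
      linarith
    calc M0 * Real.exp (-β * t0) = (M0 * Real.exp (-β * t0) / (C - β)) * (C - β) := by
          field_simp
      _ ≤ A * (C - β) := by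
          exact mul_le_mul_of_nonneg_right h1 hCβ.le
      _ = (C - β) * A := mul_comm _ _
  set F : ℝ → ℝ := fun t => (V t - (A * Real.exp (-β * (t - t0)) + N / C)) * Real.exp (C * t)
    with hF
  set F' : ℝ → ℝ := fun t =>
    (V' t - A * (Real.exp (-β * (t - t0)) * (-β * 1))) * Real.exp (C * t)
      + (V t - (A * Real.exp (-β * (t - t0)) + N / C)) * (Real.exp (C * t) * (C * 1))
    with hF'
  have hDF : ∀ t ∈ Set.Ioo t0 t1, HasDerivAt F (F' t) t := by
    intro t htm
    have hV : HasDerivAt V (V' t) t :=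
      (hderiv t (Set.mem_Icc_of_Ioo htm)).hasDerivAt (Icc_mem_nhds htm.1 htm.2)
    have hinner : HasDerivAt (fun s : ℝ => -β * (s - t0)) (-β * 1) t :=
      ((hasDerivAt_id t).sub_const t0).const_mul (-β)
    have hg : HasDerivAt (fun s : ℝ => A * Real.exp (-β * (s - t0)) + N / C)
        (A * (Real.exp (-β * (t - t0)) * (-β * 1))) t :=
      ((hinner.exp).const_mul A).add_const (N / C)
    have he : HasDerivAt (fun s : ℝ => Real.exp (C * s)) (Real.exp (C * t) * (C * 1)) t :=
      ((hasDerivAt_id t).const_mul C).exp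
    exact (hV.sub hg).mul he
  have hcont : ContinuousOn F (Set.Icc t0 t1) := by
    have hVc : ContinuousOn V (Set.Icc t0 t1) := fun t htm =>
      (hderiv t htm).continuousWithinAt
    apply ContinuousOn.mul
    · exact hVc.sub (Continuous.continuousOn (by continuity))
    · exact Continuous.continuousOn (by continuity)
  have hanti : AntitoneOn F (Set.Icc t0 t1) := by
    have hint : interior (Set.Icc t0 t1) = Set.Ioo t0 t1 := interior_Icc
    apply antitoneOn_of_deriv_nonpos (convex_Icc t0 t1) hcont
    · rw [hint]
      exact fun t htm => (hDF t htm).differentiableAt.differentiableWithinAt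
    · rw [hint]
      intro t htm
      rw [(hDF t htm).deriv]
      have hi := hineq t (Set.mem_Icc_of_Ioo htm)
      have e1pos : 0 < Real.exp (-β * (t - t0)) := Real.exp_pos _
      have e2pos : 0 < Real.exp (C * t) := Real.exp_pos _
      have hsplit : Real.exp (-β * t) = Real.exp (-β * (t - t0)) * Real.exp (-β * t0) := by
        rw [← Real.exp_add]; ring_nf
      have hNC : C * (N / C) = N := mul_div_cancel₀ N (ne_of_gt hCpos)
      have hbound : V' t + C * V t - A * (Real.exp (-β * (t - t0)) * (-β * 1))
          - C * (A * Real.exp (-β * (t - t0)) + N / C)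
          ≤ Real.exp (-β * (t - t0)) * (M0 * Real.exp (-β * t0) - (C - β) * A) := by
        rw [hsplit] at hi
        nlinarith [hi, hNC]
      have hneg : Real.exp (-β * (t - t0)) * (M0 * Real.exp (-β * t0) - (C - β) * A) ≤ 0 :=
        mul_nonpos_of_nonneg_of_nonpos e1pos.le (by linarith)
      have : V' t + C * V t - A * (Real.exp (-β * (t - t0)) * (-β * 1))
          - C * (A * Real.exp (-β * (t - t0)) + N / C) ≤ 0 := le_trans hbound hneg
      simp only [hF']
      nlinarith [this, e2pos]
  intro t htm
  have hF0 : F t0 = 0 := by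
    simp only [hF]
    have : V t0 - (A * Real.exp (-β * (t0 - t0)) + N / C) = 0 := by
      simp [hA]
    rw [this, zero_mul]
  have hle : F t ≤ F t0 := hanti (Set.left_mem_Icc.mpr ht) htm htm.1
  rw [hF0] at hle
  simp only [hF] at hle
  have e2pos : 0 < Real.exp (C * t) := Real.exp_pos _
  nlinarith [hle, e2pos]
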